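/- Let a, b be real numbers with a > -1, |b| < 1 and |b| < 1 + a, set κ_{a,b} = 1/((1+b)Β(a+1,b+1)), and for s, ε > 0 define h_s(ε) = (1/Β(a+1,b+1)) ∫_s^{s+ε} u^a (s+ε-u)^b du - κ_{a,b} ε^{1+b} s^a. Then: (i) if a > 1, there is C = C(a,b) > 0 with |h_s(ε)| ≤ C (s+ε)^{a-1} ε^{2+b} for all s, ε > 0; (ii) if 0 < a ≤ 1, there is C = C(a,b) > 0 with |h_s(ε)| ≤ C ε^{1+a+b} for all s, ε > 0; (iii) if -1 < a < 0, then for every ν with 0 < ν < 1+a there is C = C(a,b,ν) > 0 with |h_s(ε)| ≤ C s^{a-ν} ε^{1+b+ν} for all s, ε > 0. -/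

import Mathlib

open Real MeasureTheory

/-- The Euler Beta function. -/
noncomputable def Beta (x y : ℝ) : ℝ := Real.Gamma x * Real.Gamma y / Real.Gamma (x + y)

/-- `h_s(ε) = E[(B^{a,b}_{s+ε} - B^{a,b}_s)²] - κ_{a,b} ε^{1+b} s^a`. -/
noncomputable def h (a b s ε : ℝ) : ℝ :=
  (1 / Beta (a + 1) (b + 1)) * (∫ u in s..(s + ε), u ^ a * (s + ε - u) ^ b) -
    (1 / ((1 + b) * Beta (a + 1) (b + 1))) * ε ^ (1 + b) * s ^ a

lemma beta_pos {a b : ℝ} (ha : -1 < a) (hb : -1 < b) : 0 < Beta (a+1) (b+1) := by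
  unfold Beta
  have h1 : 0 < Real.Gamma (a+1) := Real.Gamma_pos_of_pos (by linarith)
  have h2 : 0 < Real.Gamma (b+1) := Real.Gamma_pos_of_pos (by linarith)
  have h3 : 0 < Real.Gamma (a+1+(b+1)) := Real.Gamma_pos_of_pos (by linarith)
  positivity

lemma intInt_one_sub (b : ℝ) (hb : -1 < b) :
    IntervalIntegrable (fun v : ℝ => (1 - v) ^ b) volume (0:ℝ) 1 := by
  have := (intervalIntegral.intervalIntegrable_rpow' (a := (0:ℝ)) (b := (1:ℝ)) hb).comp_sub_left 1
  simpa using this.symm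

lemma integ_one_sub (b : ℝ) (hb : -1 < b) :
    ∫ v in (0:ℝ)..1, (1 - v) ^ b = 1 / (1 + b) := by
  have h1 := intervalIntegral.integral_comp_sub_left (a := (0:ℝ)) (b := (1:ℝ))
      (fun x : ℝ => x ^ b) 1
  simp only [sub_self, sub_zero] at h1
  rw [h1, integral_rpow (Or.inl hb), Real.one_rpow, Real.zero_rpow (by linarith)]
  ring_nf

lemma diff_rpow_le (a s x C : ℝ) (hs : 0 < s) (hx : 0 ≤ x)
    (hC : ∀ u ∈ Set.Icc s (s + x), |a * u ^ (a - 1)| ≤ C) :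
    |(s + x) ^ a - s ^ a| ≤ C * x := by
  have h := Convex.norm_image_sub_le_of_norm_hasDerivWithin_le (f := fun y : ℝ => y ^ a)
    (f' := fun u => a * u ^ (a - 1)) (s := Set.Icc s (s + x))
    (fun u hu => (Real.hasDerivAt_rpow_const (p := a)
      (Or.inl (ne_of_gt (lt_of_lt_of_le hs hu.1)))).hasDerivWithinAt)
    (fun u hu => by rw [Real.norm_eq_abs]; exact hC u hu) (convex_Icc _ _)
    ⟨le_rfl, by linarith⟩ ⟨by linarith, le_rfl⟩
  simpa [Real.norm_eq_abs, abs_of_nonneg hx] using h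

lemma key (a b s ε M : ℝ) (ha : -1 < a) (hb : -1 < b) (hs : 0 < s) (hε : 0 < ε)
    (hM : ∀ v ∈ Set.Icc (0:ℝ) 1, |(s + ε * v) ^ a - s ^ a| ≤ M) :
    |h a b s ε| ≤ ε ^ (1 + b) * M / ((1 + b) * Beta (a+1) (b+1)) := by
  have hB := beta_pos ha hb
  have hb1 : (0:ℝ) < 1 + b := by linarith
  have hcont : ContinuousOn (fun v : ℝ => (s + ε * v) ^ a) (Set.uIcc (0:ℝ) 1) := by
    apply ContinuousOn.rpow_const
    · exact (continuous_const.add (continuous_const.mul continuous_id)).continuousOn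
    · intro v hv
      rw [Set.uIcc_of_le (by norm_num : (0:ℝ) ≤ 1)] at hv
      have : 0 < s + ε * v := by nlinarith [hv.1]
      exact Or.inl this.ne'
  have Ig := intInt_one_sub b hb
  have I1 : IntervalIntegrable (fun v : ℝ => (s + ε * v) ^ a * (1 - v) ^ b) volume 0 1 :=
    Ig.continuousOn_mul hcont
  have I2 : IntervalIntegrable (fun v : ℝ => s ^ a * (1 - v) ^ b) volume 0 1 :=
    Ig.const_mul _
  have e1 : (∫ u in s..(s + ε), u ^ a * (s + ε - u) ^ b)
      = ∫ t in (0:ℝ)..ε, (s + t) ^ a * (ε - t) ^ b := by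
    have h1 := intervalIntegral.integral_comp_add_left (a := (0:ℝ)) (b := ε)
        (fun u => u ^ a * (s + ε - u) ^ b) s
    rw [add_zero] at h1
    rw [← h1]
    apply intervalIntegral.integral_congr
    intro t _
    show (s + t) ^ a * (s + ε - (s + t)) ^ b = (s + t) ^ a * (ε - t) ^ b
    have : s + ε - (s + t) = ε - t := by ring
    rw [this]
  have e2 : (∫ t in (0:ℝ)..ε, (s + t) ^ a * (ε - t) ^ b)
      = ε * ∫ v in (0:ℝ)..1, (s + ε * v) ^ a * (ε - ε * v) ^ b := by
    have h2 := intervalIntegral.smul_integral_comp_mul_right (a := (0:ℝ)) (b := 1)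
        (fun t => (s + t) ^ a * (ε - t) ^ b) ε
    simp only [zero_mul, one_mul, smul_eq_mul] at h2
    rw [← h2]
    congr 1
    apply intervalIntegral.integral_congr
    intro v _
    simp only [mul_comm v ε]
  have e3 : (∫ v in (0:ℝ)..1, (s + ε * v) ^ a * (ε - ε * v) ^ b)
      = ε ^ b * ∫ v in (0:ℝ)..1, (s + ε * v) ^ a * (1 - v) ^ b := by
    rw [← intervalIntegral.integral_const_mul]
    apply intervalIntegral.integral_congr
    intro v hv
    rw [Set.uIcc_of_le (by norm_num : (0:ℝ) ≤ 1)] at hv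
    have h1v : (0:ℝ) ≤ 1 - v := by linarith [hv.2]
    show (s + ε * v) ^ a * (ε - ε * v) ^ b = ε ^ b * ((s + ε * v) ^ a * (1 - v) ^ b)
    have : ε - ε * v = ε * (1 - v) := by ring
    rw [this, Real.mul_rpow hε.le h1v]
    ring
  have eεb : ε * ε ^ b = ε ^ (1 + b) := by
    rw [Real.rpow_add hε, Real.rpow_one]
  have hdiff : h a b s ε = ε ^ (1 + b) / Beta (a+1) (b+1)
      * ∫ v in (0:ℝ)..1, ((s + ε * v) ^ a - s ^ a) * (1 - v) ^ b := by
    have hsub : (∫ v in (0:ℝ)..1, ((s + ε * v) ^ a - s ^ a) * (1 - v) ^ b)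
        = (∫ v in (0:ℝ)..1, (s + ε * v) ^ a * (1 - v) ^ b)
          - ∫ v in (0:ℝ)..1, s ^ a * (1 - v) ^ b := by
      rw [← intervalIntegral.integral_sub I1 I2]
      apply intervalIntegral.integral_congr
      intro v _; ring
    rw [hsub, intervalIntegral.integral_const_mul, integ_one_sub b hb]
    unfold h
    rw [e1, e2, e3, ← eεb]
    field_simp
  have hM0 : 0 ≤ M := le_trans (abs_nonneg _) (hM 0 ⟨le_rfl, zero_le_one⟩)
  have hbound : |∫ v in (0:ℝ)..1, ((s + ε * v) ^ a - s ^ a) * (1 - v) ^ b| ≤ M / (1 + b) := by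
    have hg : IntervalIntegrable (fun v : ℝ => M * (1 - v) ^ b) volume 0 1 := Ig.const_mul _
    have hae : ∀ᵐ t ∂(volume.restrict (Set.uIoc (0:ℝ) 1)),
        ‖((s + ε * t) ^ a - s ^ a) * (1 - t) ^ b‖ ≤ M * (1 - t) ^ b := by
      rw [Set.uIoc_of_le (by norm_num : (0:ℝ) ≤ 1)]
      refine (ae_restrict_mem measurableSet_Ioc).mono fun t ht => ?_
      have h1t : (0:ℝ) ≤ 1 - t := by linarith [ht.2]
      rw [Real.norm_eq_abs, abs_mul, abs_of_nonneg (Real.rpow_nonneg h1t b)]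
      exact mul_le_mul_of_nonneg_right (hM t ⟨ht.1.le, ht.2⟩) (Real.rpow_nonneg h1t b)
    have := intervalIntegral.norm_integral_le_abs_of_norm_le hae hg
    rw [intervalIntegral.integral_const_mul, integ_one_sub b hb] at this
    calc |∫ v in (0:ℝ)..1, ((s + ε * v) ^ a - s ^ a) * (1 - v) ^ b|
        ≤ |M * (1 / (1 + b))| := this
      _ = M / (1 + b) := by
          rw [abs_of_nonneg (by positivity)]; ring
  rw [hdiff, abs_mul, abs_of_nonneg (by positivity : (0:ℝ) ≤ ε ^ (1 + b) / Beta (a+1) (b+1))]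
  calc ε ^ (1 + b) / Beta (a+1) (b+1) * |∫ v in (0:ℝ)..1, ((s + ε * v) ^ a - s ^ a) * (1 - v) ^ b|
      ≤ ε ^ (1 + b) / Beta (a+1) (b+1) * (M / (1 + b)) :=
        mul_le_mul_of_nonneg_left hbound (by positivity)
    _ = ε ^ (1 + b) * M / ((1 + b) * Beta (a+1) (b+1)) := by
        rw [div_mul_div_comm, mul_comm (Beta (a+1) (b+1)) (1+b)]

theorem stmt_15 (a b : ℝ) (ha : -1 < a) (hb1 : |b| < 1) (hb2 : |b| < 1 + a) :
    (1 < a → ∃ C > (0:ℝ), ∀ s > (0:ℝ), ∀ ε > (0:ℝ),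
        |h a b s ε| ≤ C * (s + ε) ^ (a - 1) * ε ^ (2 + b)) ∧
      (0 < a ∧ a ≤ 1 → ∃ C > (0:ℝ), ∀ s > (0:ℝ), ∀ ε > (0:ℝ),
        |h a b s ε| ≤ C * ε ^ (1 + a + b)) ∧
      (-1 < a ∧ a < 0 → ∀ ν : ℝ, 0 < ν → ν < 1 + a → ∃ C > (0:ℝ), ∀ s > (0:ℝ), ∀ ε > (0:ℝ),
        |h a b s ε| ≤ C * s ^ (a - ν) * ε ^ (1 + b + ν)) := by
  have hb : -1 < b := (abs_lt.1 hb1).1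
  have hb' : b < 1 := (abs_lt.1 hb1).2
  have hB := beta_pos ha hb
  have hb0 : (0:ℝ) < 1 + b := by linarith
  refine ⟨fun ha1 => ?_, fun ⟨ha0, hA1⟩ => ?_, fun ⟨_, ha0⟩ ν hν hνa => ?_⟩
  · -- case a > 1
    refine ⟨a / ((1 + b) * Beta (a+1) (b+1)), by positivity, fun s hs ε hε => ?_⟩
    have hM : ∀ v ∈ Set.Icc (0:ℝ) 1, |(s + ε * v) ^ a - s ^ a| ≤ a * (s + ε) ^ (a-1) * ε := by
      intro v hv
      have hsε : (0:ℝ) ≤ (s + ε) ^ (a-1) := Real.rpow_nonneg (by linarith) _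
      have hd : |(s + ε * v) ^ a - s ^ a| ≤ a * (s + ε) ^ (a-1) * (ε * v) := by
        apply diff_rpow_le a s (ε*v) (a * (s+ε)^(a-1)) hs (mul_nonneg hε.le hv.1)
        intro u hu
        have hu0 : 0 < u := lt_of_lt_of_le hs hu.1
        have hle : u ≤ s + ε := le_trans hu.2 (by nlinarith [hv.2])
        rw [abs_mul, abs_of_nonneg (by linarith : (0:ℝ) ≤ a),
          abs_of_nonneg (Real.rpow_nonneg hu0.le _)]
        exact mul_le_mul_of_nonneg_left
          (Real.rpow_le_rpow hu0.le hle (by linarith)) (by linarith)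
      refine hd.trans ?_
      have hεv : ε * v ≤ ε := by
        calc ε * v ≤ ε * 1 := mul_le_mul_of_nonneg_left hv.2 hε.le
          _ = ε := mul_one ε
      exact mul_le_mul_of_nonneg_left hεv (mul_nonneg (by linarith) hsε)
    have hk := key a b s ε _ ha hb hs hε hM
    refine hk.trans_eq ?_
    rw [show (2:ℝ) + b = (1 + b) + 1 by ring, Real.rpow_add_one hε.ne']
    ring
  · -- case 0 < a ≤ 1
    have hm2 : (0:ℝ) < max a 2 := lt_of_lt_of_le two_pos (le_max_right _ _)
    refine ⟨max a 2 / ((1 + b) * Beta (a+1) (b+1)), by positivity, fun s hs ε hε => ?_⟩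
    have hεa : (0:ℝ) ≤ ε ^ a := Real.rpow_nonneg hε.le a
    have hM : ∀ v ∈ Set.Icc (0:ℝ) 1, |(s + ε * v) ^ a - s ^ a| ≤ max a 2 * ε ^ a := by
      intro v hv
      rcases le_total ε s with hc | hc
      · have hd : |(s + ε * v) ^ a - s ^ a| ≤ a * s ^ (a-1) * (ε * v) := by
          apply diff_rpow_le a s (ε*v) (a * s^(a-1)) hs (mul_nonneg hε.le hv.1)
          intro u hu
          have hu0 : 0 < u := lt_of_lt_of_le hs hu.1
          rw [abs_mul, abs_of_nonneg ha0.le, abs_of_nonneg (Real.rpow_nonneg hu0.le _)]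
          exact mul_le_mul_of_nonneg_left
            (Real.rpow_le_rpow_of_nonpos hs hu.1 (by linarith)) ha0.le
        have hsa1 : (0:ℝ) ≤ s ^ (a-1) := Real.rpow_nonneg hs.le _
        have h1 : s ^ (a-1) ≤ ε ^ (a-1) := Real.rpow_le_rpow_of_nonpos hε hc (by linarith)
        have h2 : ε ^ (a-1) * ε = ε ^ a := by
          rw [← Real.rpow_add_one hε.ne' (a-1)]; ring_nf
        calc |(s + ε * v) ^ a - s ^ a| ≤ a * s ^ (a-1) * (ε * v) := hd
          _ ≤ a * s ^ (a-1) * ε := by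
              have hεv : ε * v ≤ ε := by
                calc ε * v ≤ ε * 1 := mul_le_mul_of_nonneg_left hv.2 hε.le
                  _ = ε := mul_one ε
              exact mul_le_mul_of_nonneg_left hεv (mul_nonneg ha0.le hsa1)
          _ ≤ a * (ε ^ (a-1) * ε) := by
              rw [mul_assoc]
              exact mul_le_mul_of_nonneg_left
                (mul_le_mul_of_nonneg_right h1 hε.le) ha0.le
          _ = a * ε ^ a := by rw [h2]
          _ ≤ max a 2 * ε ^ a := mul_le_mul_of_nonneg_right (le_max_left _ _) hεa
      · have hmono : s ^ a ≤ (s + ε * v) ^ a :=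
          Real.rpow_le_rpow hs.le (by nlinarith [hv.1]) ha0.le
        have h2 : (s + ε * v) ^ a ≤ (2*ε) ^ a :=
          Real.rpow_le_rpow (by nlinarith [hv.1]) (by nlinarith [hv.2]) ha0.le
        have h2e : ((2:ℝ)*ε) ^ a = 2 ^ a * ε ^ a := Real.mul_rpow (by norm_num) hε.le
        have h2a : (2:ℝ) ^ a ≤ 2 := by
          calc (2:ℝ) ^ a ≤ 2 ^ (1:ℝ) := Real.rpow_le_rpow_of_exponent_le one_le_two hA1
            _ = 2 := Real.rpow_one 2
        have hsa : 0 ≤ s ^ a := Real.rpow_nonneg hs.le a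
        rw [abs_of_nonneg (by linarith)]
        calc (s + ε * v) ^ a - s ^ a ≤ (2*ε) ^ a := by linarith
          _ = 2 ^ a * ε ^ a := h2e
          _ ≤ 2 * ε ^ a := mul_le_mul_of_nonneg_right h2a hεa
          _ ≤ max a 2 * ε ^ a := mul_le_mul_of_nonneg_right (le_max_right _ _) hεa
    have hk := key a b s ε _ ha hb hs hε hM
    refine hk.trans_eq ?_
    rw [show (1:ℝ) + a + b = (1 + b) + a by ring, Real.rpow_add hε (1+b) a]
    ring
  · -- case -1 < a < 0
    have hν1 : ν < 1 := by linarith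
    have hm1 : (0:ℝ) < max 1 (-a) := lt_of_lt_of_le one_pos (le_max_left _ _)
    refine ⟨max 1 (-a) / ((1 + b) * Beta (a+1) (b+1)), by positivity, fun s hs ε hε => ?_⟩
    have hsν : (0:ℝ) ≤ s ^ (a-ν) := Real.rpow_nonneg hs.le _
    have hεν : (0:ℝ) ≤ ε ^ ν := Real.rpow_nonneg hε.le _
    have hM : ∀ v ∈ Set.Icc (0:ℝ) 1,
        |(s + ε * v) ^ a - s ^ a| ≤ max 1 (-a) * (s ^ (a-ν) * ε ^ ν) := by
      intro v hv
      rcases le_total ε s with hc | hc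
      · have hd : |(s + ε * v) ^ a - s ^ a| ≤ (-a) * s ^ (a-1) * (ε * v) := by
          apply diff_rpow_le a s (ε*v) ((-a) * s^(a-1)) hs (mul_nonneg hε.le hv.1)
          intro u hu
          have hu0 : 0 < u := lt_of_lt_of_le hs hu.1
          rw [abs_mul, abs_of_neg ha0, abs_of_nonneg (Real.rpow_nonneg hu0.le _)]
          exact mul_le_mul_of_nonneg_left
            (Real.rpow_le_rpow_of_nonpos hs hu.1 (by linarith)) (by linarith)
        have hsa1 : (0:ℝ) ≤ s ^ (a-1) := Real.rpow_nonneg hs.le _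
        have hkey : s ^ (a-1) * ε ≤ s ^ (a-ν) * ε ^ ν := by
          have e1 : ε = ε ^ ν * ε ^ (1-ν) := by
            rw [← Real.rpow_add hε, show ν + (1-ν) = 1 by ring, Real.rpow_one]
          have e2 : ε ^ (1-ν) ≤ s ^ (1-ν) := Real.rpow_le_rpow hε.le hc (by linarith)
          have e3 : s ^ (a-1) * s ^ (1-ν) = s ^ (a-ν) := by
            rw [← Real.rpow_add hs]; ring_nf
          calc s ^ (a-1) * ε = s ^ (a-1) * (ε ^ ν * ε ^ (1-ν)) := by rw [← e1]
            _ ≤ s ^ (a-1) * (ε ^ ν * s ^ (1-ν)) :=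
              mul_le_mul_of_nonneg_left (mul_le_mul_of_nonneg_left e2 hεν) hsa1
            _ = s ^ (a-ν) * ε ^ ν := by rw [← e3]; ring
        calc |(s + ε * v) ^ a - s ^ a| ≤ (-a) * s ^ (a-1) * (ε * v) := hd
          _ ≤ (-a) * s ^ (a-1) * ε := by
              have hεv : ε * v ≤ ε := by
                calc ε * v ≤ ε * 1 := mul_le_mul_of_nonneg_left hv.2 hε.le
                  _ = ε := mul_one ε
              exact mul_le_mul_of_nonneg_left hεv (mul_nonneg (by linarith) hsa1)
          _ ≤ (-a) * (s ^ (a-ν) * ε ^ ν) := by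
              rw [mul_assoc]
              exact mul_le_mul_of_nonneg_left hkey (by linarith)
          _ ≤ max 1 (-a) * (s ^ (a-ν) * ε ^ ν) :=
            mul_le_mul_of_nonneg_right (le_max_right _ _) (by positivity)
      · have hmono : (s + ε * v) ^ a ≤ s ^ a :=
          Real.rpow_le_rpow_of_nonpos hs (by nlinarith [hv.1]) ha0.le
        have hpos : (0:ℝ) ≤ (s + ε * v) ^ a :=
          Real.rpow_nonneg (by nlinarith [hv.1]) _
        have hsν2 : s ^ a ≤ s ^ (a-ν) * ε ^ ν := by
          have e1 : s ^ a = s ^ (a-ν) * s ^ ν := by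
            rw [← Real.rpow_add hs]; ring_nf
          have e2 : s ^ ν ≤ ε ^ ν := Real.rpow_le_rpow hs.le hc hν.le
          calc s ^ a = s ^ (a-ν) * s ^ ν := e1
            _ ≤ s ^ (a-ν) * ε ^ ν := mul_le_mul_of_nonneg_left e2 hsν
        rw [abs_sub_comm, abs_of_nonneg (by linarith)]
        calc s ^ a - (s + ε * v) ^ a ≤ s ^ a := by linarith
          _ ≤ s ^ (a-ν) * ε ^ ν := hsν2
          _ ≤ max 1 (-a) * (s ^ (a-ν) * ε ^ ν) :=
            le_mul_of_one_le_left (by positivity) (le_max_left _ _)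
    have hk := key a b s ε _ ha hb hs hε hM
    refine hk.trans_eq ?_
    rw [show (1:ℝ) + b + ν = (1 + b) + ν by ring, Real.rpow_add hε (1+b) ν]
    ring
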